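/- Let φ : ℝ → ℝ be a Schwartz function. Then ‖φ(·)² cos(2ⁿ ·)‖_{L²(ℝ)}² → (1/2) ‖φ‖_{L⁴(ℝ)}⁴ as n → ∞, and consequently for all sufficiently large n the norm ‖φ(·)² cos(2ⁿ ·)‖_{L²(ℝ)} is bounded below by (1/2) ‖φ‖_{L⁴(ℝ)}². -/

import Mathlib

open MeasureTheory Real Filter Topology

noncomputable section

/-- For a Schwartz function `φ : ℝ → ℝ`, `‖φ(·)² cos(2ⁿ·)‖_{L²}² → (1/2)‖φ‖_{L⁴}⁴`
as `n → ∞`; consequently, for all sufficiently large `n`,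
`‖φ(·)² cos(2ⁿ·)‖_{L²} ≥ (1/2) ‖φ‖_{L⁴}²`. -/
theorem l2_norm_sq_cos_tendsto_and_lower_bound (φ : SchwartzMap ℝ ℝ) :
    Tendsto (fun n : ℕ => ∫ x : ℝ, (φ x ^ 2 * Real.cos (2 ^ n * x)) ^ 2)
      atTop (nhds ((1/2) * ∫ x : ℝ, φ x ^ 4)) ∧
    ∀ᶠ n : ℕ in atTop,
      (1/2) * (∫ x : ℝ, φ x ^ 4) ^ (1/2 : ℝ)
        ≤ (∫ x : ℝ, (φ x ^ 2 * Real.cos (2 ^ n * x)) ^ 2) ^ (1/2 : ℝ) := by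
  -- boundedness of φ
  set M : ℝ := SchwartzMap.seminorm ℝ 0 0 φ with hM
  have hMnn : 0 ≤ M := apply_nonneg _ _
  have hbd : ∀ x : ℝ, ‖φ x‖ ≤ M := by
    intro x
    have := φ.le_seminorm ℝ 0 0 x
    simpa using this
  -- integrability of φ^4
  have hint4 : Integrable (fun x : ℝ => φ x ^ 4) volume := by
    refine ((φ.integrable (μ := volume)).norm.const_mul (M ^ 3)).mono'
      ((φ.continuous.pow 4).aestronglyMeasurable) ?_
    filter_upwards with x
    have h1 : ‖φ x ^ 4‖ = ‖φ x‖ ^ 3 * ‖φ x‖ := by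
      rw [norm_pow]; ring
    rw [h1]
    gcongr
    exact hbd x
  -- the complexified function
  set f : ℝ → ℂ := fun x => ((φ x ^ 4 : ℝ) : ℂ) with hf
  have hintc : Integrable f volume := hint4.ofReal
  -- frequency sequence
  set ξ : ℕ → ℝ := fun n => 2 ^ (n + 1) / (2 * π) with hξdef
  have hξ : Tendsto ξ atTop atTop := by
    apply Tendsto.atTop_div_const (by positivity : (0:ℝ) < 2 * π)
    exact (tendsto_pow_atTop_atTop_of_one_lt one_lt_two).comp (tendsto_add_atTop_nat 1)
  have hξc : Tendsto ξ atTop (cocompact ℝ) := by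
    rw [cocompact_eq_atBot_atTop]
    exact hξ.mono_right le_sup_right
  -- Riemann-Lebesgue
  have key : Tendsto (fun n : ℕ => ∫ x : ℝ, φ x ^ 4 * Real.cos (2 ^ (n + 1) * x))
      atTop (𝓝 0) := by
    have h0 := (Real.zero_at_infty_fourier f).comp hξc
    have hre := (Complex.continuous_re.tendsto 0).comp h0
    simp only [Complex.zero_re, Function.comp_def] at hre
    refine hre.congr fun n => ?_
    rw [Real.fourier_real_eq_integral_exp_smul]
    have hgint : Integrable (fun x : ℝ =>
        Complex.exp (↑(-2 * π * x * ξ n) * Complex.I) • f x) volume := by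
      simp only [smul_eq_mul]
      refine hintc.bdd_mul (c := 1) ?_ (Eventually.of_forall fun x => ?_)
      · apply Continuous.aestronglyMeasurable
        exact Complex.continuous_exp.comp (by continuity)
      · rw [Complex.norm_exp_ofReal_mul_I]
    have hcomm := Complex.reCLM.integral_comp_comm hgint
    simp only [Complex.reCLM_apply] at hcomm
    rw [← hcomm]
    refine integral_congr_ae (Eventually.of_forall fun x => ?_)
    have hπ : (π : ℝ) ≠ 0 := Real.pi_ne_zero
    have harg : -2 * π * x * ξ n = -(2 ^ (n + 1) * x) := by
      rw [hξdef]; field_simp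
    simp only [smul_eq_mul, Complex.reCLM_apply, hf, Complex.mul_re,
      Complex.ofReal_re, Complex.ofReal_im, mul_zero, sub_zero,
      Complex.exp_ofReal_mul_I_re, harg, Real.cos_neg]
    ring
  -- splitting the main integral
  have hcosint : ∀ n : ℕ,
      Integrable (fun x : ℝ => φ x ^ 4 * Real.cos (2 ^ (n + 1) * x)) volume := by
    intro n
    refine hint4.mono' ?_ ?_
    · exact ((φ.continuous.pow 4).mul
        (Real.continuous_cos.comp (by continuity))).aestronglyMeasurable
    · filter_upwards with x
      have h1 : ‖φ x ^ 4 * Real.cos (2 ^ (n + 1) * x)‖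
          = φ x ^ 4 * |Real.cos (2 ^ (n + 1) * x)| := by
        rw [norm_mul, Real.norm_eq_abs, Real.norm_eq_abs, abs_of_nonneg (by positivity)]
      rw [h1]
      exact mul_le_of_le_one_right (by positivity) (Real.abs_cos_le_one _)
  have hsplit : ∀ n : ℕ, (∫ x : ℝ, (φ x ^ 2 * Real.cos (2 ^ n * x)) ^ 2)
      = (∫ x : ℝ, φ x ^ 4) * (1/2)
        + (∫ x : ℝ, φ x ^ 4 * Real.cos (2 ^ (n + 1) * x)) * (1/2) := by
    intro n
    have hptw : ∀ x : ℝ, (φ x ^ 2 * Real.cos (2 ^ n * x)) ^ 2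
        = φ x ^ 4 * (1/2) + φ x ^ 4 * Real.cos (2 ^ (n + 1) * x) * (1/2) := by
      intro x
      have h2 : 2 * (2 ^ n * x) = 2 ^ (n + 1) * x := by ring
      rw [mul_pow, Real.cos_sq, h2]
      ring
    simp_rw [hptw]
    rw [integral_add (hint4.mul_const _) ((hcosint n).mul_const _),
      integral_mul_const, integral_mul_const]
  -- the limit
  have hlim : Tendsto (fun n : ℕ => ∫ x : ℝ, (φ x ^ 2 * Real.cos (2 ^ n * x)) ^ 2)
      atTop (𝓝 ((1/2) * ∫ x : ℝ, φ x ^ 4)) := by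
    simp only [hsplit]
    have h : Tendsto (fun n : ℕ => (∫ x : ℝ, φ x ^ 4) * (1/2)
        + (∫ x : ℝ, φ x ^ 4 * Real.cos (2 ^ (n + 1) * x)) * (1/2)) atTop
        (𝓝 ((∫ x : ℝ, φ x ^ 4) * (1/2) + 0 * (1/2))) :=
      tendsto_const_nhds.add (key.mul_const _)
    convert h using 2
    ring
  refine ⟨hlim, ?_⟩
  -- the eventual lower bound
  set L : ℝ := ∫ x : ℝ, φ x ^ 4 with hLdef
  have hL0 : 0 ≤ L := integral_nonneg fun x => by positivity
  rcases hL0.eq_or_lt with hL | hL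
  · filter_upwards with n
    rw [← hL, Real.zero_rpow (by norm_num), mul_zero]
    exact Real.rpow_nonneg (integral_nonneg fun x => sq_nonneg _) _
  · have hev := hlim.eventually (eventually_gt_nhds (show L/4 < (1/2) * L by linarith))
    filter_upwards [hev] with n hn
    have heq : (1/2) * L ^ (1/2 : ℝ) = (L/4) ^ (1/2 : ℝ) := by
      rw [← Real.sqrt_eq_rpow, ← Real.sqrt_eq_rpow,
        show L/4 = (1/2)^2 * L by ring, Real.sqrt_mul (by positivity),
        Real.sqrt_sq (by norm_num : (0:ℝ) ≤ 1/2)]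
    rw [heq]
    exact Real.rpow_le_rpow (by positivity) hn.le (by norm_num)
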